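/- Let 0 ≤ b < d. For λ ≥ b², λ > 0, let E(λ) := { (α₁, α₂) ∈ ℝ² : 0 ≤ α₁ ≤ 1 − b λ^{-1/2}, max(0, 1 − d λ^{-1/2} − α₁) ≤ α₂ ≤ 1 − b λ^{-1/2} − α₁ }. Then lim_{λ → ∞} √λ ∫∫_{E(λ)} exp( −λ(1 − α₁ − α₂)²/2 ) dα₂ dα₁ = ∫_b^d exp(−x²/2) dx. -/

import Mathlib

open MeasureTheory Real Filter

/-- The strip `E(λ)` close to the hypotenuse of the triangle. -/
def stripE (b d lam : ℝ) : Set (ℝ × ℝ) :=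
  {q : ℝ × ℝ | 0 ≤ q.1 ∧ q.1 ≤ 1 - b / Real.sqrt lam ∧
    max 0 (1 - d / Real.sqrt lam - q.1) ≤ q.2 ∧ q.2 ≤ 1 - b / Real.sqrt lam - q.1}

lemma strip_fubini_step (b d lam : ℝ) (hb : 0 ≤ b) (hbd : b ≤ d) (hlam : d ^ 2 + 1 ≤ lam) :
    ∫ p in stripE b d lam, Real.exp (-(lam * (1 - p.1 - p.2) ^ 2 / 2)) =
      ∫ x in Set.Icc (0:ℝ) (1 - b / Real.sqrt lam),
        ∫ y in Set.Icc (max 0 (1 - d / Real.sqrt lam - x)) (1 - b / Real.sqrt lam - x),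
          Real.exp (-(lam * (1 - x - y) ^ 2 / 2)) := by
  set s := Real.sqrt lam with hs
  have hd : 0 ≤ d := hb.trans hbd
  have hlam1 : (1:ℝ) ≤ lam := by nlinarith [sq_nonneg d]
  have hs1 : (1:ℝ) ≤ s := by
    rw [hs, show (1:ℝ) = Real.sqrt 1 by simp]; exact Real.sqrt_le_sqrt hlam1
  have hs0 : 0 < s := lt_of_lt_of_le one_pos hs1
  set X := 1 - b / s with hX
  have hX1 : X ≤ 1 := by
    rw [hX]; nlinarith [div_nonneg hb hs0.le]
  have hE : MeasurableSet (stripE b d lam) := by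
    unfold stripE
    apply MeasurableSet.inter
    · exact measurableSet_le measurable_const measurable_fst
    apply MeasurableSet.inter
    · exact measurableSet_le measurable_fst measurable_const
    apply MeasurableSet.inter
    · exact measurableSet_le (by fun_prop) measurable_snd
    · exact measurableSet_le measurable_snd (by fun_prop)
  have hfc : Continuous fun p : ℝ × ℝ => Real.exp (-(lam * (1 - p.1 - p.2) ^ 2 / 2)) := by
    fun_prop
  have hsub : stripE b d lam ⊆ Set.Icc ((0:ℝ),(0:ℝ)) (1,1) := by
    rintro ⟨x, y⟩ ⟨h1, h2, h3, h4⟩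
    simp only [Set.mem_Icc, Prod.le_def] at *
    refine ⟨⟨h1, le_trans (le_max_left _ _) h3⟩, ⟨le_trans h2 hX1, ?_⟩⟩
    have := le_trans h4 (by linarith : X - x ≤ X)
    linarith [hX1]
  have hint : IntegrableOn (fun p : ℝ × ℝ => Real.exp (-(lam * (1 - p.1 - p.2) ^ 2 / 2)))
      (stripE b d lam) := by
    exact (hfc.continuousOn.integrableOn_compact isCompact_Icc).mono_set hsub
  rw [← integral_indicator hE]
  rw [show (volume : Measure (ℝ × ℝ)) = (volume : Measure ℝ).prod volume from
    (MeasureTheory.Measure.volume_eq_prod ℝ ℝ)]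
  rw [MeasureTheory.integral_prod _ (by
    rw [integrable_indicator_iff hE]
    exact hint)]
  rw [← integral_indicator (measurableSet_Icc :
    MeasurableSet (Set.Icc (0:ℝ) X))]
  apply integral_congr_ae
  filter_upwards with x
  by_cases hx : x ∈ Set.Icc (0:ℝ) X
  · have heq : (fun y => (stripE b d lam).indicator
        (fun p : ℝ × ℝ => Real.exp (-(lam * (1 - p.1 - p.2) ^ 2 / 2))) (x, y)) =
        (Set.Icc (max 0 (1 - d / s - x)) (X - x)).indicator
          (fun y => Real.exp (-(lam * (1 - x - y) ^ 2 / 2))) := by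
      funext y
      rcases hx with ⟨hx0, hxX⟩
      by_cases hy : y ∈ Set.Icc (max 0 (1 - d / s - x)) (X - x)
      · rw [Set.indicator_of_mem hy, Set.indicator_of_mem]
        exact ⟨hx0, hxX, by simpa [hX] using hy.1, by simpa [hX] using hy.2⟩
      · rw [Set.indicator_of_notMem hy, Set.indicator_of_notMem]
        intro hmem
        exact hy ⟨by simpa [hX] using hmem.2.2.1, by simpa [hX] using hmem.2.2.2⟩
    rw [heq, integral_indicator measurableSet_Icc, Set.indicator_of_mem hx]
  · have heq : (fun y => (stripE b d lam).indicator
        (fun p : ℝ × ℝ => Real.exp (-(lam * (1 - p.1 - p.2) ^ 2 / 2))) (x, y)) = fun _ => 0 := by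
      funext y
      rw [Set.indicator_of_notMem]
      intro hmem
      exact hx ⟨hmem.1, hmem.2.1⟩
    rw [heq, integral_zero, Set.indicator_of_notMem hx]

lemma strip_inner_eval (b d lam x : ℝ) (hb : 0 ≤ b) (hbd : b ≤ d) (hlam : d ^ 2 + 1 ≤ lam)
    (hxX : x ≤ 1 - b / Real.sqrt lam) :
    ∫ y in Set.Icc (max 0 (1 - d / Real.sqrt lam - x)) (1 - b / Real.sqrt lam - x),
      Real.exp (-(lam * (1 - x - y) ^ 2 / 2)) =
    (Real.sqrt lam)⁻¹ * ∫ t in b..(min d (Real.sqrt lam * (1 - x))),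
      Real.exp (-(t ^ 2 / 2)) := by
  set s := Real.sqrt lam with hs
  have hd : 0 ≤ d := hb.trans hbd
  have hlam0 : (0:ℝ) ≤ lam := by nlinarith [sq_nonneg d]
  have hs1 : (1:ℝ) ≤ s := by
    rw [hs, show (1:ℝ) = Real.sqrt 1 by simp]
    exact Real.sqrt_le_sqrt (by nlinarith [sq_nonneg d])
  have hs0 : 0 < s := lt_of_lt_of_le one_pos hs1
  have hbds : b / s ≤ d / s := by gcongr
  have hlu : max 0 (1 - d / s - x) ≤ 1 - b / s - x :=
    max_le (by linarith) (by linarith)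
  rw [integral_Icc_eq_integral_Ioc, ← intervalIntegral.integral_of_le hlu,
    intervalIntegral.integral_comp_sub_left (fun u => Real.exp (-(lam * u ^ 2 / 2))) (1 - x)]
  have e1 : 1 - x - (1 - b / s - x) = b / s := by ring
  have e2 : 1 - x - max 0 (1 - d / s - x) = min (d / s) (1 - x) := by
    rcases le_total (1 - d / s - x) 0 with h | h
    · rw [max_eq_left h, min_eq_right (by linarith)]; ring
    · rw [max_eq_right h, min_eq_left (by linarith)]; ring
  rw [e1, e2]
  have e3 : ∀ u : ℝ, Real.exp (-(lam * u ^ 2 / 2)) = Real.exp (-((s * u) ^ 2 / 2)) := by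
    intro u; rw [mul_pow, hs, Real.sq_sqrt hlam0]
  simp only [e3]
  rw [intervalIntegral.integral_comp_mul_left (fun t => Real.exp (-(t ^ 2 / 2))) hs0.ne']
  rw [mul_div_cancel₀ _ hs0.ne', mul_min_of_nonneg _ _ hs0.le,
    mul_div_cancel₀ _ hs0.ne', smul_eq_mul]

lemma strip_outer_bounds (b d lam : ℝ) (hb : 0 ≤ b) (hbd : b ≤ d) (hlam : d ^ 2 + 1 ≤ lam) :
    (1 - d / Real.sqrt lam) * (Real.sqrt lam)⁻¹ * (∫ t in b..d, Real.exp (-(t ^ 2 / 2))) ≤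
      (∫ x in (0:ℝ)..(1 - b / Real.sqrt lam),
        (Real.sqrt lam)⁻¹ * ∫ t in b..(min d (Real.sqrt lam * (1 - x))),
          Real.exp (-(t ^ 2 / 2))) ∧
    (∫ x in (0:ℝ)..(1 - b / Real.sqrt lam),
        (Real.sqrt lam)⁻¹ * ∫ t in b..(min d (Real.sqrt lam * (1 - x))),
          Real.exp (-(t ^ 2 / 2))) ≤
      (1 - d / Real.sqrt lam) * (Real.sqrt lam)⁻¹ * (∫ t in b..d, Real.exp (-(t ^ 2 / 2)))
        + (d - b) ^ 2 / lam := by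
  set s := Real.sqrt lam with hs
  have hd : 0 ≤ d := hb.trans hbd
  have hlam0 : (0:ℝ) < lam := by nlinarith [sq_nonneg d]
  have hs1 : (1:ℝ) ≤ s := by
    rw [hs, show (1:ℝ) = Real.sqrt 1 by simp]
    exact Real.sqrt_le_sqrt (by nlinarith [sq_nonneg d])
  have hs0 : 0 < s := lt_of_lt_of_le one_pos hs1
  have hss : s * s = lam := Real.mul_self_sqrt hlam0.le
  have hds : d ≤ s := by
    rw [hs, show d = Real.sqrt (d ^ 2) by rw [Real.sqrt_sq hd]]
    exact Real.sqrt_le_sqrt (by linarith)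
  set x₀ := 1 - d / s with hx₀
  set X := 1 - b / s with hX
  have hx₀0 : 0 ≤ x₀ := by
    rw [hx₀]; have : d / s ≤ 1 := (div_le_one hs0).2 hds; linarith
  have hx₀X : x₀ ≤ X := by
    rw [hx₀, hX]
    have : b / s ≤ d / s := by gcongr
    linarith
  have h0X : (0:ℝ) ≤ X := le_trans hx₀0 hx₀X
  set Φ : ℝ → ℝ := fun r => ∫ t in b..r, Real.exp (-(t ^ 2 / 2)) with hΦdef
  have hΦcont : Continuous Φ :=
    intervalIntegral.continuous_primitive
      (fun a c => (Continuous.intervalIntegrable (by fun_prop) a c)) b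
  set g : ℝ → ℝ := fun x => s⁻¹ * Φ (min d (s * (1 - x))) with hgdef
  have hgc : Continuous g := by
    apply continuous_const.mul
    exact hΦcont.comp (continuous_const.min (by fun_prop))
  have hsplit : (∫ x in (0:ℝ)..x₀, g x) + (∫ x in x₀..X, g x) = ∫ x in (0:ℝ)..X, g x :=
    intervalIntegral.integral_add_adjacent_intervals
      (hgc.intervalIntegrable 0 x₀) (hgc.intervalIntegrable x₀ X)
  have hfirst : (∫ x in (0:ℝ)..x₀, g x) = x₀ * (s⁻¹ * Φ d) := by
    rw [intervalIntegral.integral_congr (g := fun _ => s⁻¹ * Φ d) ?_,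
      intervalIntegral.integral_const, smul_eq_mul, sub_zero]
    intro x hx
    rw [Set.uIcc_of_le hx₀0] at hx
    have : d ≤ s * (1 - x) := by
      have h1 : s * (1 - x₀) = d := by
        rw [hx₀]; field_simp; ring
      nlinarith [hx.1, hx.2]
    simp only [hgdef, min_eq_left this]
  have hΦbounds : ∀ x ∈ Set.Icc x₀ X, 0 ≤ g x ∧ g x ≤ s⁻¹ * (d - b) := by
    intro x hx
    have hr1 : b ≤ min d (s * (1 - x)) := by
      have : b ≤ s * (1 - x) := by
        have h1 : s * (1 - X) = b := by rw [hX]; field_simp; ring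
        nlinarith [hx.2]
      exact le_min hbd this
    have hr2 : min d (s * (1 - x)) ≤ d := min_le_left _ _
    have hΦ0 : 0 ≤ Φ (min d (s * (1 - x))) :=
      intervalIntegral.integral_nonneg hr1 (fun t _ => (Real.exp_pos _).le)
    have hΦle : Φ (min d (s * (1 - x))) ≤ d - b := by
      have h1 : Φ (min d (s * (1 - x))) ≤ ∫ t in b..(min d (s * (1 - x))), (1:ℝ) := by
        apply intervalIntegral.integral_mono_on hr1
          (Continuous.intervalIntegrable (by fun_prop) _ _) intervalIntegrable_const
        intro t _
        rw [show (1:ℝ) = Real.exp 0 by simp]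
        exact Real.exp_le_exp.2 (by nlinarith [sq_nonneg t])
      rw [intervalIntegral.integral_const, smul_eq_mul, mul_one] at h1
      linarith [hr2, hr1]
    constructor
    · exact mul_nonneg (inv_nonneg.2 hs0.le) hΦ0
    · exact mul_le_mul_of_nonneg_left hΦle (inv_nonneg.2 hs0.le)
  have hP0 : 0 ≤ ∫ x in x₀..X, g x :=
    intervalIntegral.integral_nonneg hx₀X (fun x hx => (hΦbounds x hx).1)
  have hPle : (∫ x in x₀..X, g x) ≤ (X - x₀) * (s⁻¹ * (d - b)) := by
    have h1 : (∫ x in x₀..X, g x) ≤ ∫ _x in x₀..X, s⁻¹ * (d - b) :=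
      intervalIntegral.integral_mono_on hx₀X (hgc.intervalIntegrable _ _)
        intervalIntegrable_const (fun x hx => (hΦbounds x hx).2)
    rwa [intervalIntegral.integral_const, smul_eq_mul] at h1
  have hXx₀ : X - x₀ = (d - b) / s := by rw [hX, hx₀]; field_simp; ring
  constructor
  · rw [← hsplit, hfirst]
    have h3 : (1 - d / s) * s⁻¹ * Φ d = x₀ * (s⁻¹ * Φ d) := by rw [hx₀]; ring
    rw [h3]; linarith
  · rw [← hsplit, hfirst]
    have h2 : (X - x₀) * (s⁻¹ * (d - b)) = (d - b) ^ 2 / lam := by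
      rw [hXx₀, ← hss]; field_simp
    have h3 : (1 - d / s) * s⁻¹ * Φ d = x₀ * (s⁻¹ * Φ d) := by rw [hx₀]; ring
    rw [h3]
    linarith [hPle, h2.le]

lemma strip_bounds (b d lam : ℝ) (hb : 0 ≤ b) (hbd : b ≤ d) (hlam : d ^ 2 + 1 ≤ lam) :
    (1 - d / Real.sqrt lam) * (∫ t in b..d, Real.exp (-(t ^ 2 / 2))) ≤
      Real.sqrt lam * ∫ p in stripE b d lam, Real.exp (-(lam * (1 - p.1 - p.2) ^ 2 / 2)) ∧
    Real.sqrt lam * (∫ p in stripE b d lam, Real.exp (-(lam * (1 - p.1 - p.2) ^ 2 / 2))) ≤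
      (1 - d / Real.sqrt lam) * (∫ t in b..d, Real.exp (-(t ^ 2 / 2)))
        + (d - b) ^ 2 / Real.sqrt lam := by
  set s := Real.sqrt lam with hs
  have hd : 0 ≤ d := hb.trans hbd
  have hlam0 : (0:ℝ) < lam := by nlinarith [sq_nonneg d]
  have hs1 : (1:ℝ) ≤ s := by
    rw [hs, show (1:ℝ) = Real.sqrt 1 by simp]
    exact Real.sqrt_le_sqrt (by nlinarith [sq_nonneg d])
  have hs0 : 0 < s := lt_of_lt_of_le one_pos hs1
  have hss : s * s = lam := Real.mul_self_sqrt hlam0.le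
  have hds : d ≤ s := by
    rw [hs, show d = Real.sqrt (d ^ 2) by rw [Real.sqrt_sq hd]]
    exact Real.sqrt_le_sqrt (by linarith)
  have h0X : (0:ℝ) ≤ 1 - b / s := by
    have h1 : b / s ≤ 1 := (div_le_one hs0).2 (hbd.trans hds)
    linarith
  have hI : (∫ p in stripE b d lam, Real.exp (-(lam * (1 - p.1 - p.2) ^ 2 / 2))) =
      ∫ x in (0:ℝ)..(1 - b / s),
        s⁻¹ * ∫ t in b..(min d (s * (1 - x))), Real.exp (-(t ^ 2 / 2)) := by
    rw [strip_fubini_step b d lam hb hbd hlam]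
    rw [MeasureTheory.setIntegral_congr_fun measurableSet_Icc
      (fun x hx => strip_inner_eval b d lam x hb hbd hlam hx.2)]
    rw [integral_Icc_eq_integral_Ioc, ← intervalIntegral.integral_of_le h0X]
  obtain ⟨h1, h2⟩ := strip_outer_bounds b d lam hb hbd hlam
  rw [hI]
  set J := ∫ x in (0:ℝ)..(1 - b / s),
    s⁻¹ * ∫ t in b..(min d (s * (1 - x))), Real.exp (-(t ^ 2 / 2)) with hJ
  set A := ∫ t in b..d, Real.exp (-(t ^ 2 / 2)) with hA
  have e1 : s * ((1 - d / s) * s⁻¹ * A) = (1 - d / s) * A := by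
    field_simp
  have e2 : s * ((d - b) ^ 2 / lam) = (d - b) ^ 2 / s := by
    rw [← hss]; field_simp
  constructor
  · calc (1 - d / s) * A = s * ((1 - d / s) * s⁻¹ * A) := e1.symm
      _ ≤ s * J := by apply mul_le_mul_of_nonneg_left h1 hs0.le
  · calc s * J ≤ s * ((1 - d / s) * s⁻¹ * A + (d - b) ^ 2 / lam) :=
        mul_le_mul_of_nonneg_left h2 hs0.le
      _ = (1 - d / s) * A + (d - b) ^ 2 / s := by rw [mul_add, e1, e2]

lemma strip_sqrt_tendsto_atTop : Tendsto Real.sqrt atTop atTop := by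
  apply tendsto_atTop_atTop_of_monotone (fun _ _ h => Real.sqrt_le_sqrt h)
  intro C
  exact ⟨C ^ 2, by rw [Real.sqrt_sq_eq_abs]; exact le_abs_self C⟩

lemma strip_div_sqrt_tendsto_zero (c : ℝ) :
    Tendsto (fun lam : ℝ => c / Real.sqrt lam) atTop (nhds 0) :=
  Tendsto.div_atTop tendsto_const_nhds strip_sqrt_tendsto_atTop

/-- asymptotics of the integral of `exp(−λ(1−α₁−α₂)²/2)` over the strip `E(λ)`. -/
theorem strip_integral_limit (b d : ℝ) (hb : 0 ≤ b) (hbd : b < d) :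
    Tendsto (fun lam : ℝ =>
        Real.sqrt lam * ∫ p in stripE b d lam, Real.exp (-(lam * (1 - p.1 - p.2) ^ 2 / 2)))
      atTop (nhds (∫ x in b..d, Real.exp (-(x ^ 2 / 2)))) := by
  set A := ∫ x in b..d, Real.exp (-(x ^ 2 / 2)) with hA
  have hlow : Tendsto (fun lam : ℝ => (1 - d / Real.sqrt lam) * A) atTop (nhds A) := by
    have h0 : Tendsto (fun lam : ℝ => 1 - d / Real.sqrt lam) atTop (nhds (1 - 0)) :=
      tendsto_const_nhds.sub (strip_div_sqrt_tendsto_zero d)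
    have := h0.mul (tendsto_const_nhds : Tendsto (fun _ : ℝ => A) atTop (nhds A))
    simpa using this
  have hup : Tendsto (fun lam : ℝ => (1 - d / Real.sqrt lam) * A + (d - b) ^ 2 / Real.sqrt lam)
      atTop (nhds A) := by
    have := hlow.add (strip_div_sqrt_tendsto_zero ((d - b) ^ 2))
    simpa using this
  apply tendsto_of_tendsto_of_tendsto_of_le_of_le' hlow hup
  · filter_upwards [eventually_ge_atTop (d ^ 2 + 1)] with lam hlam
    exact (strip_bounds b d lam hb hbd.le hlam).1
  · filter_upwards [eventually_ge_atTop (d ^ 2 + 1)] with lam hlam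
    exact (strip_bounds b d lam hb hbd.le hlam).2
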